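/- For all 1 ≤ i, j ≤ m, all n ≥ 0 and all ξ ∈ H_n: f_{n+2}(e_i ⊗ f_{n+1}(ξ ⊗ e_j)) = f_{n+2}(f_{n+1}(e_i ⊗ ξ) ⊗ e_j). That is, the left and right creation operators commute: L_i R_j = R_j L_i as maps H_n → H_{n+2}. -/

import Mathlib

noncomputable section

open scoped InnerProductSpace Matrix ComplexOrder

/-- The `n`-fold tensor power `(ℂ^m)^{⊗n}`, realized as the space of
complex-valued functions on strings in `{1,…,m}^n`. -/
abbrev TP (m n : ℕ) : Type := EuclideanSpace ℂ (Fin n → Fin m)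

/-- The set of vectors `x ⊗ p ⊗ y` spanning `J^{(n)}`, where
`p = Σ_{i,j} a_{ij} e_i ⊗ e_j` is the Temperley–Lieb vector of `A`. -/
def TLset (m : ℕ) (A : Matrix (Fin m) (Fin m) ℂ) (n : ℕ) : Set (TP m n) :=
  { v | ∃ (i : ℕ) (hi : i + 2 ≤ n) (x : TP m i) (y : TP m (n - (i + 2))),
      v = WithLp.toLp 2 fun s => x (fun j => s ⟨j.1, by have := j.isLt; omega⟩) *
        A (s ⟨i, by omega⟩) (s ⟨i + 1, by omega⟩) *
        y (fun j => s ⟨i + 2 + j.1, by have := j.isLt; omega⟩) }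

/-- `J^{(n)}`, the degree-`n` component of the ideal generated by `p`. -/
def Jsp (m : ℕ) (A : Matrix (Fin m) (Fin m) ℂ) (n : ℕ) : Submodule ℂ (TP m n) :=
  Submodule.span ℂ (TLset m A n)

/-- `H_n`, the orthogonal complement of `J^{(n)}`. -/
def Hsp (m : ℕ) (A : Matrix (Fin m) (Fin m) ℂ) (n : ℕ) : Submodule ℂ (TP m n) :=
  (Jsp m A n)ᗮ

/-- `f_n`, the orthogonal projection of `(ℂ^m)^{⊗n}` onto `H_n`. -/
def fProj (m : ℕ) (A : Matrix (Fin m) (Fin m) ℂ) (n : ℕ) : TP m n →L[ℂ] TP m n :=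
  (Hsp m A n).subtypeL ∘L Submodule.orthogonalProjectionOnto (Hsp m A n)

/-- The matrix of an operator on `(ℂ^m)^{⊗k}` in the standard basis. -/
def matOf {m k : ℕ} (B : TP m k →L[ℂ] TP m k) :
    Matrix (Fin k → Fin m) (Fin k → Fin m) ℂ :=
  fun s t => B (EuclideanSpace.single t 1) s

/-- The ampliation `B ⊗ 1^{⊗(b-a)}` of an operator `B` on `(ℂ^m)^{⊗a}`, acting on the
first `a` tensor factors of `(ℂ^m)^{⊗b}`. -/
def ampFirst (m a b : ℕ) (h : a ≤ b) (B : TP m a →L[ℂ] TP m a) : TP m b →L[ℂ] TP m b :=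
  Matrix.toEuclideanCLM (𝕜 := ℂ)
    (Matrix.of fun s t : Fin b → Fin m =>
      if (fun j : Fin (b - a) => s ⟨a + j.1, by have := j.isLt; omega⟩)
          = (fun j : Fin (b - a) => t ⟨a + j.1, by have := j.isLt; omega⟩)
        then matOf B (fun j : Fin a => s ⟨j.1, by have := j.isLt; omega⟩)
               (fun j : Fin a => t ⟨j.1, by have := j.isLt; omega⟩)
        else 0)

/-- The ampliation `1^{⊗(b-a)} ⊗ C` of an operator `C` on `(ℂ^m)^{⊗a}`, acting on the
last `a` tensor factors of `(ℂ^m)^{⊗b}`. -/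
def ampLast (m a b : ℕ) (h : a ≤ b) (C : TP m a →L[ℂ] TP m a) : TP m b →L[ℂ] TP m b :=
  Matrix.toEuclideanCLM (𝕜 := ℂ)
    (Matrix.of fun s t : Fin b → Fin m =>
      if (fun j : Fin (b - a) => s ⟨j.1, by have := j.isLt; omega⟩)
          = (fun j : Fin (b - a) => t ⟨j.1, by have := j.isLt; omega⟩)
        then matOf C (fun j : Fin a => s ⟨(b - a) + j.1, by have := j.isLt; omega⟩)
               (fun j : Fin a => t ⟨(b - a) + j.1, by have := j.isLt; omega⟩)
        else 0)

/-- Tensoring on the left with the basis vector `e_i` : the isometry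
`ξ ↦ e_i ⊗ ξ` from `(ℂ^m)^{⊗n}` to `(ℂ^m)^{⊗(n+1)}`. -/
def consCLM (m n : ℕ) (i : Fin m) : TP m n →L[ℂ] TP m (n + 1) :=
  LinearMap.toContinuousLinearMap <| Matrix.toEuclideanLin <|
    Matrix.of fun (s : Fin (n + 1) → Fin m) (t : Fin n → Fin m) =>
      if s 0 = i ∧ (fun j : Fin n => s j.succ) = t then 1 else 0

/-- Tensoring on the right with the basis vector `e_j` : the isometry
`ξ ↦ ξ ⊗ e_j` from `(ℂ^m)^{⊗n}` to `(ℂ^m)^{⊗(n+1)}`. -/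
def snocCLM (m n : ℕ) (j : Fin m) : TP m n →L[ℂ] TP m (n + 1) :=
  LinearMap.toContinuousLinearMap <| Matrix.toEuclideanLin <|
    Matrix.of fun (s : Fin (n + 1) → Fin m) (t : Fin n → Fin m) =>
      if s (Fin.last n) = j ∧ (fun k : Fin n => s k.castSucc) = t then 1 else 0

/-- The left creation operator `L_i = f_{n+1}(e_i ⊗ ·) : (ℂ^m)^{⊗n} → (ℂ^m)^{⊗(n+1)}`. -/
def Lop (m : ℕ) (A : Matrix (Fin m) (Fin m) ℂ) (n : ℕ) (i : Fin m) :
    TP m n →L[ℂ] TP m (n + 1) :=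
  fProj m A (n + 1) ∘L consCLM m n i

/-- The right creation operator `R_j = f_{n+1}(· ⊗ e_j) : (ℂ^m)^{⊗n} → (ℂ^m)^{⊗(n+1)}`. -/
def Rop (m : ℕ) (A : Matrix (Fin m) (Fin m) ℂ) (n : ℕ) (j : Fin m) :
    TP m n →L[ℂ] TP m (n + 1) :=
  fProj m A (n + 1) ∘L snocCLM m n j

/-- The left creation operator `L_i : H_n → H_{n+1}`, viewed as a map between
the fibers of the subproduct system. -/
def LopH (m : ℕ) (A : Matrix (Fin m) (Fin m) ℂ) (n : ℕ) (i : Fin m) :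
    Hsp m A n →L[ℂ] Hsp m A (n + 1) :=
  Submodule.orthogonalProjectionOnto (Hsp m A (n + 1)) ∘L consCLM m n i ∘L (Hsp m A n).subtypeL

/-- The right creation operator `R_j : H_n → H_{n+1}`, viewed as a map between
the fibers of the subproduct system. -/
def RopH (m : ℕ) (A : Matrix (Fin m) (Fin m) ℂ) (n : ℕ) (j : Fin m) :
    Hsp m A n →L[ℂ] Hsp m A (n + 1) :=
  Submodule.orthogonalProjectionOnto (Hsp m A (n + 1)) ∘L snocCLM m n j ∘L (Hsp m A n).subtypeL
lemma consCLM_apply (m n : ℕ) (i : Fin m) (v : TP m n) (s : Fin (n+1) → Fin m) :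
    consCLM m n i v s = if s 0 = i then v (fun k => s k.succ) else 0 := by
  classical
  show ∑ t, (if s 0 = i ∧ (fun j : Fin n => s j.succ) = t then (1:ℂ) else 0) * v t
      = if s 0 = i then v (fun k => s k.succ) else 0
  simp only [ite_and, ite_mul, one_mul, zero_mul]
  by_cases h : s 0 = i
  · simp [h, Finset.sum_ite_eq]
  · simp [h]

lemma snocCLM_apply (m n : ℕ) (j : Fin m) (v : TP m n) (s : Fin (n+1) → Fin m) :
    snocCLM m n j v s = if s (Fin.last n) = j then v (fun k => s k.castSucc) else 0 := by
  classical
  show ∑ t, (if s (Fin.last n) = j ∧ (fun k : Fin n => s k.castSucc) = t then (1:ℂ) else 0) * v t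
      = if s (Fin.last n) = j then v (fun k => s k.castSucc) else 0
  simp only [ite_and, ite_mul, one_mul, zero_mul]
  by_cases h : s (Fin.last n) = j
  · simp [h, Finset.sum_ite_eq]
  · simp [h]

lemma cons_snoc_swap (m n : ℕ) (i j : Fin m) (ξ : TP m n) :
    consCLM m (n+1) i (snocCLM m n j ξ) = snocCLM m (n+1) j (consCLM m n i ξ) := by
  ext s
  rw [consCLM_apply, snocCLM_apply, snocCLM_apply, consCLM_apply]
  simp only [Fin.succ_last, Fin.castSucc_zero]
  by_cases h1 : s 0 = i <;> by_cases h2 : s (Fin.last (n+1)) = j <;>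
    simp [h1, h2]

lemma fProj_eq_zero_of_mem (m : ℕ) (A : Matrix (Fin m) (Fin m) ℂ) (n : ℕ)
    (v : TP m n) (hv : v ∈ Jsp m A n) : fProj m A n v = 0 := by
  have : v ∈ (Hsp m A n)ᗮ := Submodule.le_orthogonal_orthogonal _ hv
  simp [fProj, Submodule.orthogonalProjectionOnto_apply_of_mem_orthogonal this]

lemma sub_fProj_mem (m : ℕ) (A : Matrix (Fin m) (Fin m) ℂ) (n : ℕ) (v : TP m n) :
    v - fProj m A n v ∈ Jsp m A n := by
  have := Submodule.sub_starProjection_mem_orthogonal (K := Hsp m A n) v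
  rwa [Hsp, Submodule.orthogonal_orthogonal] at this

lemma fProj_congr (m : ℕ) (A : Matrix (Fin m) (Fin m) ℂ) (n : ℕ) (a b : TP m n)
    (h : a - b ∈ Jsp m A n) : fProj m A n a = fProj m A n b := by
  have := fProj_eq_zero_of_mem m A n _ h
  rw [map_sub, sub_eq_zero] at this
  exact this

lemma consCLM_mem_Jsp (m : ℕ) (A : Matrix (Fin m) (Fin m) ℂ) (n : ℕ) (i : Fin m)
    (v : TP m (n+1)) (hv : v ∈ Jsp m A (n+1)) :
    consCLM m (n+1) i v ∈ Jsp m A (n+2) := by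
  have hle : Jsp m A (n+1) ≤
      (Jsp m A (n+2)).comap (consCLM m (n+1) i : TP m (n+1) →ₗ[ℂ] TP m (n+2)) := by
    rw [Jsp, Submodule.span_le]
    rintro v ⟨k, hk, x, y, rfl⟩
    apply Submodule.subset_span
    refine ⟨k+1, by omega,
      (WithLp.toLp 2 fun u => if u 0 = i then x (fun r => u r.succ) else 0 : TP m (k+1)),
      (WithLp.toLp 2 fun t => y (fun r => t ⟨r.1, by have := r.isLt; omega⟩) : TP m ((n+2)-(k+1+2))), ?_⟩
    ext s
    show consCLM m (n+1) i _ s = _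
    rw [consCLM_apply]
    simp only
    by_cases h : s 0 = i
    · have h0 : s ⟨(0 : Fin (k+1)).1, by omega⟩ = i := by
        simpa using h
      rw [if_pos h, if_pos h0]
      congr 1
      exact congrArg y.ofLp (funext fun r => congrArg s (Fin.ext (by simp only [Fin.val_succ]; omega)))
    · have h0 : ¬ s ⟨(0 : Fin (k+1)).1, by omega⟩ = i := by
        simpa using h
      rw [if_neg h, if_neg h0]
      ring
  exact hle hv

lemma snocCLM_mem_Jsp (m : ℕ) (A : Matrix (Fin m) (Fin m) ℂ) (n : ℕ) (j : Fin m)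
    (v : TP m (n+1)) (hv : v ∈ Jsp m A (n+1)) :
    snocCLM m (n+1) j v ∈ Jsp m A (n+2) := by
  have hle : Jsp m A (n+1) ≤
      (Jsp m A (n+2)).comap (snocCLM m (n+1) j : TP m (n+1) →ₗ[ℂ] TP m (n+2)) := by
    rw [Jsp, Submodule.span_le]
    rintro v ⟨k, hk, x, y, rfl⟩
    apply Submodule.subset_span
    refine ⟨k, by omega, x,
      (WithLp.toLp 2 fun t => if t ⟨(n+1)-(k+2), by omega⟩ = j
        then y (fun r => t ⟨r.1, by have := r.isLt; omega⟩) else 0 : TP m ((n+2)-(k+2))), ?_⟩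
    ext s
    show snocCLM m (n+1) j _ s = _
    rw [snocCLM_apply]
    simp only
    by_cases hj : s (Fin.last (n+1)) = j
    · have h0 : s ⟨k+2+((n+1)-(k+2)), by omega⟩ = j := by
        rw [show (⟨k+2+((n+1)-(k+2)), by omega⟩ : Fin (n+2)) = Fin.last (n+1) from
          Fin.ext (by simp; omega)]
        exact hj
      rw [if_pos hj, if_pos h0]
      rfl
    · have h0 : ¬ s ⟨k+2+((n+1)-(k+2)), by omega⟩ = j := by
        rw [show (⟨k+2+((n+1)-(k+2)), by omega⟩ : Fin (n+2)) = Fin.last (n+1) from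
          Fin.ext (by simp; omega)]
        exact hj
      rw [if_neg hj, if_neg h0]
      ring
  exact hle hv
/-- `f_{n+2}(e_i ⊗ f_{n+1}(ξ ⊗ e_j)) = f_{n+2}(f_{n+1}(e_i ⊗ ξ) ⊗ e_j)`
for all `ξ ∈ H_n`: left and right creation operators commute, `L_i R_j = R_j L_i`. -/
theorem statement6 (m : ℕ) (hm : 2 ≤ m) (A : Matrix (Fin m) (Fin m) ℂ)
    (hA : IsUnit A)
    (hAA : A * A.map (starRingEnd ℂ) ∈ Matrix.unitaryGroup (Fin m) ℂ)
    (n : ℕ) (i j : Fin m) (ξ : TP m n) (hξ : ξ ∈ Hsp m A n) :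
    fProj m A (n + 2) (consCLM m (n + 1) i (fProj m A (n + 1) (snocCLM m n j ξ)))
      = fProj m A (n + 2) (snocCLM m (n + 1) j (fProj m A (n + 1) (consCLM m n i ξ))) := by

  have hmem : ∀ w : TP m (n+1), fProj m A (n+1) w - w ∈ Jsp m A (n+1) := fun w => by
    have h := (Jsp m A (n+1)).neg_mem (sub_fProj_mem m A (n+1) w)
    rwa [neg_sub] at h
  have h1 : fProj m A (n + 2) (consCLM m (n + 1) i (fProj m A (n + 1) (snocCLM m n j ξ)))
      = fProj m A (n + 2) (consCLM m (n + 1) i (snocCLM m n j ξ)) := by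
    apply fProj_congr
    rw [← map_sub]
    exact consCLM_mem_Jsp m A n i _ (hmem _)
  have h2 : fProj m A (n + 2) (snocCLM m (n + 1) j (fProj m A (n + 1) (consCLM m n i ξ)))
      = fProj m A (n + 2) (snocCLM m (n + 1) j (consCLM m n i ξ)) := by
    apply fProj_congr
    rw [← map_sub]
    exact snocCLM_mem_Jsp m A n j _ (hmem _)
  rw [h1, h2, cons_snoc_swap]
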